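/- Let κ ≥ 1 be an integer, Q₁, …, Q_κ : ℝ → ℝ twice continuously differentiable with Q_j(t) ≠ Q_k(t) for all j ≠ k and all t, and J₀ : ℝ → ℝ continuously differentiable. Set v(t,x) = t − x², R_k(t) = Σ_{j≠k} 1/(Q_k − Q_j), A_k(t) = κ·Q_k' + t − Q_k² − 2·R_k, and on Ω = {(t,x) : x ≠ Q_k(t) for all k} define b₊(t,x) = −(1/κ)·Σ_{k=1}^κ 1/(x − Q_k) and 2·b₁(t,x) = (1/κ)·Σ_{k=1}^κ A_k/(x − Q_k) − (2/κ)·Σ_{k=1}^κ Q_k − J₀(t). Then the second governing equation κ·∂_t b₁ + ∂_x∂_x b₁ + v·∂_x b₁ = 2·κ·b₁·∂_x b₊ holds on Ω if and only if for every t and every k = 1, …, κ the following three equations hold: (3.22) (κ·Q_k' − t + Q_k²)·A_k = 2·(Σ_{j≠k} A_j/(Q_k − Q_j) − 2·Σ_{j=1}^κ Q_j − κ·J₀); (3.23) κ·A_k' = −2·Q_k·A_k + 2·Σ_{j≠k} (A_k − A_j)/(Q_k − Q_j)²; (3.24) κ·J₀' + 2·Σ_{k=1}^κ Q_k' = (1/κ)·Σ_{k=1}^κ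 A_k. -/

import Mathlib

open scoped BigOperators

open Filter Topology

open Filter Topology

lemma limit_eq_zero_of_vanish {s : Set ℝ} {x₀ L : ℝ} (hne : (𝓝[s] x₀).NeBot) {f : ℝ → ℝ}
    (h0 : ∀ x ∈ s, f x = 0) (hL : Tendsto f (𝓝[s] x₀) (𝓝 L)) : L = 0 := by
  have h2 : Tendsto f (𝓝[s] x₀) (𝓝 0) := by
    apply tendsto_const_nhds.congr'
    filter_upwards [self_mem_nhdsWithin] with x hx
    exact (h0 x hx).symm
  exact tendsto_nhds_unique hL h2

lemma neBot_poles {n : ℕ} (q : Fin n → ℝ) (k : Fin n) :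
    (𝓝[{x : ℝ | ∀ j, x ≠ q j}] (q k)).NeBot := by
  have hs : {x : ℝ | ∀ j, x ≠ q j} = {(q k)}ᶜ ∩ (Set.range q \ {q k})ᶜ := by
    ext x
    simp only [Set.mem_setOf_eq, Set.mem_inter_iff, Set.mem_compl_iff, Set.mem_singleton_iff,
      Set.mem_diff, Set.mem_range, not_and, not_exists, not_forall, not_not]
    constructor
    · intro h
      exact ⟨h k, fun hr => absurd (hr.choose_spec) (Ne.symm (h _))⟩
    · rintro ⟨h1, h2⟩ j hj
      exact h1 (h2 ⟨j, hj.symm⟩)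
  have ht : (Set.range q \ {q k})ᶜ ∈ 𝓝 (q k) := by
    apply IsOpen.mem_nhds
    · exact (((Set.finite_range q).subset (Set.diff_subset)).isClosed).isOpen_compl
    · simp
  rw [hs, ← nhdsWithin_restrict' _ ht]
  have : (𝓝[≠] (q k)).NeBot := inferInstance
  exact this

lemma extract_simple {n : ℕ} (q b : Fin n → ℝ) (c : ℝ) (hq : Function.Injective q)
    (h : ∀ x, (∀ j, x ≠ q j) → (∑ j, b j / (x - q j)) + c = 0) :
    (∀ k, b k = 0) ∧ c = 0 := by
  have hqd : ∀ j k : Fin n, j ≠ k → q j - q k ≠ 0 := by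
    intro j k hjk
    exact sub_ne_zero.2 (fun hh => hjk (hq hh))
  have hb : ∀ k, b k = 0 := by
    intro k
    set G : ℝ → ℝ := fun x => b k + (∑ j ∈ Finset.univ.erase k, b j * (x - q k) / (x - q j))
      + c * (x - q k) with hG
    have hEq : ∀ x ∈ {x : ℝ | ∀ j, x ≠ q j}, G x = 0 := by
      intro x hx
      have hx' : ∀ j, x ≠ q j := hx
      have hxk : x - q k ≠ 0 := sub_ne_zero.2 (hx' k)
      have key : G x = (x - q k) * ((∑ j, b j / (x - q j)) + c) := by
        rw [hG, mul_add, Finset.mul_sum, ← Finset.add_sum_erase _ _ (Finset.mem_univ k)]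
        have h1 : (x - q k) * (b k / (x - q k)) = b k := by field_simp
        rw [h1]
        ring_nf
        congr 1
        apply Finset.sum_congr rfl
        intro j hj
        ring
      rw [key, h x hx', mul_zero]
    have hT : Tendsto G (𝓝[{x : ℝ | ∀ j, x ≠ q j}] (q k)) (𝓝 (b k)) := by
      have hc : Tendsto G (𝓝 (q k)) (𝓝 (b k + (∑ j ∈ Finset.univ.erase k,
          b j * (q k - q k) / (q k - q j)) + c * (q k - q k))) := by
        apply Tendsto.add
        apply Tendsto.add
        · exact tendsto_const_nhds
        · apply tendsto_finset_sum
          intro j hj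
          have hne : q k - q j ≠ 0 := hqd k j (Finset.ne_of_mem_erase hj).symm
          exact ((continuousAt_const.mul (continuousAt_id.sub continuousAt_const)).div
            (continuousAt_id.sub continuousAt_const) hne)
        · exact continuousAt_const.mul (continuousAt_id.sub continuousAt_const)
      have : b k + (∑ j ∈ Finset.univ.erase k, b j * (q k - q k) / (q k - q j))
          + c * (q k - q k) = b k := by simp
      rw [this] at hc
      exact hc.mono_left nhdsWithin_le_nhds
    exact limit_eq_zero_of_vanish (neBot_poles q k) hEq hT
  refine ⟨hb, ?_⟩
  obtain ⟨x, hx⟩ := ((Set.finite_range q).infinite_compl).nonempty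
  have hx' : ∀ j, x ≠ q j := by
    intro j hj
    exact hx ⟨j, hj.symm⟩
  have := h x hx'
  simpa [hb] using this

lemma extract_poles {n : ℕ} (q a b : Fin n → ℝ) (c : ℝ) (hq : Function.Injective q)
    (h : ∀ x, (∀ j, x ≠ q j) → (∑ j, a j / (x - q j) ^ 2) + (∑ j, b j / (x - q j)) + c = 0) :
    (∀ k, a k = 0) ∧ (∀ k, b k = 0) ∧ c = 0 := by
  have hqd : ∀ j k : Fin n, j ≠ k → q j - q k ≠ 0 := by
    intro j k hjk
    exact sub_ne_zero.2 (fun hh => hjk (hq hh))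
  have ha : ∀ k, a k = 0 := by
    intro k
    set G : ℝ → ℝ := fun x => a k + (∑ j ∈ Finset.univ.erase k, a j * (x - q k) ^ 2 / (x - q j) ^ 2)
      + (b k * (x - q k) + ∑ j ∈ Finset.univ.erase k, b j * (x - q k) ^ 2 / (x - q j))
      + c * (x - q k) ^ 2 with hG
    have hEq : ∀ x ∈ {x : ℝ | ∀ j, x ≠ q j}, G x = 0 := by
      intro x hx
      have hx' : ∀ j, x ≠ q j := hx
      have hxk : x - q k ≠ 0 := sub_ne_zero.2 (hx' k)
      have key : G x = (x - q k) ^ 2 * ((∑ j, a j / (x - q j) ^ 2) + (∑ j, b j / (x - q j)) + c) := by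
        rw [hG, mul_add, mul_add, Finset.mul_sum, Finset.mul_sum,
          ← Finset.add_sum_erase _ (fun j => (x - q k) ^ 2 * (a j / (x - q j) ^ 2)) (Finset.mem_univ k),
          ← Finset.add_sum_erase _ (fun j => (x - q k) ^ 2 * (b j / (x - q j))) (Finset.mem_univ k)]
        have h1 : (x - q k) ^ 2 * (a k / (x - q k) ^ 2) = a k := by field_simp
        have h2 : (x - q k) ^ 2 * (b k / (x - q k)) = b k * (x - q k) := by field_simp
        rw [h1, h2]
        have h3 : ∀ j ∈ Finset.univ.erase k, (x - q k) ^ 2 * (a j / (x - q j) ^ 2)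
            = a j * (x - q k) ^ 2 / (x - q j) ^ 2 := by intro j hj; ring
        have h4 : ∀ j ∈ Finset.univ.erase k, (x - q k) ^ 2 * (b j / (x - q j))
            = b j * (x - q k) ^ 2 / (x - q j) := by intro j hj; ring
        rw [Finset.sum_congr rfl h3, Finset.sum_congr rfl h4]
        ring
      rw [key, h x hx', mul_zero]
    have hT : Tendsto G (𝓝[{x : ℝ | ∀ j, x ≠ q j}] (q k)) (𝓝 (a k)) := by
      have hc : Tendsto G (𝓝 (q k)) (𝓝 (a k + (∑ j ∈ Finset.univ.erase k,
          a j * (q k - q k) ^ 2 / (q k - q j) ^ 2)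
          + (b k * (q k - q k) + ∑ j ∈ Finset.univ.erase k, b j * (q k - q k) ^ 2 / (q k - q j))
          + c * (q k - q k) ^ 2)) := by
        apply Tendsto.add
        apply Tendsto.add
        apply Tendsto.add
        · exact tendsto_const_nhds
        · apply tendsto_finset_sum
          intro j hj
          have hne : (q k - q j) ^ 2 ≠ 0 := pow_ne_zero _ (hqd k j (Finset.ne_of_mem_erase hj).symm)
          exact ((continuousAt_const.mul ((continuousAt_id.sub continuousAt_const).pow 2)).div
            ((continuousAt_id.sub continuousAt_const).pow 2) hne)
        · apply Tendsto.add
          · exact continuousAt_const.mul (continuousAt_id.sub continuousAt_const)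
          · apply tendsto_finset_sum
            intro j hj
            have hne : q k - q j ≠ 0 := hqd k j (Finset.ne_of_mem_erase hj).symm
            exact ((continuousAt_const.mul ((continuousAt_id.sub continuousAt_const).pow 2)).div
              (continuousAt_id.sub continuousAt_const) hne)
        · exact continuousAt_const.mul ((continuousAt_id.sub continuousAt_const).pow 2)
      have hval : a k + (∑ j ∈ Finset.univ.erase k,
          a j * (q k - q k) ^ 2 / (q k - q j) ^ 2)
          + (b k * (q k - q k) + ∑ j ∈ Finset.univ.erase k, b j * (q k - q k) ^ 2 / (q k - q j))
          + c * (q k - q k) ^ 2 = a k := by simp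
      rw [hval] at hc
      exact hc.mono_left nhdsWithin_le_nhds
    exact limit_eq_zero_of_vanish (neBot_poles q k) hEq hT
  have h' : ∀ x, (∀ j, x ≠ q j) → (∑ j, b j / (x - q j)) + c = 0 := by
    intro x hx
    have := h x hx
    simpa [ha] using this
  obtain ⟨hb, hc⟩ := extract_simple q b c hq h'
  exact ⟨ha, hb, hc⟩

lemma sum_erase_swap {n : ℕ} (f : Fin n → Fin n → ℝ) :
    ∑ k, ∑ j ∈ Finset.univ.erase k, f k j = ∑ k, ∑ j ∈ Finset.univ.erase k, f j k := by
  rw [Finset.sum_comm' (t' := Finset.univ) (s' := fun y => Finset.univ.erase y)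
    (fun x y => by simp [Finset.mem_erase]; exact ne_comm)]

lemma L1 {n : ℕ} (x : ℝ) (q a a' q' : Fin n → ℝ) (hx : ∀ k, x - q k ≠ 0) :
    ∑ k, (a' k * (x - q k) + a k * q' k) / (x - q k) ^ 2
      = ∑ k, a' k / (x - q k) + ∑ k, a k * q' k / (x - q k) ^ 2 := by
  rw [← Finset.sum_add_distrib]
  refine Finset.sum_congr rfl fun k _ => ?_
  field_simp [hx k]

lemma L3 {n : ℕ} (x t : ℝ) (q a : Fin n → ℝ) (hx : ∀ k, x - q k ≠ 0) :
    (t - x ^ 2) * ∑ k, a k / (x - q k) ^ 2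
      = ∑ k, (t - (q k) ^ 2) * a k / (x - q k) ^ 2 - 2 * ∑ k, q k * a k / (x - q k) - ∑ k, a k := by
  rw [Finset.mul_sum, Finset.mul_sum, ← Finset.sum_sub_distrib, ← Finset.sum_sub_distrib]
  refine Finset.sum_congr rfl fun k _ => ?_
  field_simp [hx k]
  ring

lemma L4 {n : ℕ} (x t J κ : ℝ) (q a q' : Fin n → ℝ) :
    ∑ k, ((κ * q' k - t + (q k) ^ 2) * a k
        - 2 * ((∑ j ∈ Finset.univ.erase k, a j / (q k - q j)) - 2 * ∑ j, q j - κ * J))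
        / (x - q k) ^ 2
      = κ * ∑ k, a k * q' k / (x - q k) ^ 2
        - ∑ k, (t - (q k) ^ 2) * a k / (x - q k) ^ 2
        - 2 * ∑ k, (∑ j ∈ Finset.univ.erase k, a j / (q k - q j)) / (x - q k) ^ 2
        + (4 * ∑ j, q j + 2 * κ * J) * ∑ k, 1 / (x - q k) ^ 2 := by
  have step : ∑ k, ((κ * q' k - t + (q k) ^ 2) * a k
        - 2 * ((∑ j ∈ Finset.univ.erase k, a j / (q k - q j)) - 2 * ∑ j, q j - κ * J))
        / (x - q k) ^ 2
      = ∑ k, (κ * (a k * q' k / (x - q k) ^ 2)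
          - (t - (q k) ^ 2) * a k / (x - q k) ^ 2
          - 2 * ((∑ j ∈ Finset.univ.erase k, a j / (q k - q j)) / (x - q k) ^ 2)
          + (4 * ∑ j, q j + 2 * κ * J) * (1 / (x - q k) ^ 2)) :=
    Finset.sum_congr rfl fun k _ => by ring
  rw [step, Finset.sum_add_distrib, Finset.sum_sub_distrib, Finset.sum_sub_distrib,
    ← Finset.mul_sum _ _ κ, ← Finset.mul_sum _ _ (2:ℝ), ← Finset.mul_sum _ _ (4 * ∑ j, q j + 2 * κ * J)]

lemma L5 {n : ℕ} (x κ : ℝ) (q a a' : Fin n → ℝ) :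
    ∑ k, (κ * a' k + 2 * q k * a k
        - 2 * ∑ j ∈ Finset.univ.erase k, (a k - a j) / (q k - q j) ^ 2) / (x - q k)
      = κ * ∑ k, a' k / (x - q k) + 2 * ∑ k, q k * a k / (x - q k)
        - 2 * ∑ k, (∑ j ∈ Finset.univ.erase k, (a k - a j) / (q k - q j) ^ 2) / (x - q k) := by
  have step : ∑ k, (κ * a' k + 2 * q k * a k
        - 2 * ∑ j ∈ Finset.univ.erase k, (a k - a j) / (q k - q j) ^ 2) / (x - q k)
      = ∑ k, (κ * (a' k / (x - q k)) + 2 * (q k * a k / (x - q k))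
          - 2 * ((∑ j ∈ Finset.univ.erase k, (a k - a j) / (q k - q j) ^ 2) / (x - q k))) :=
    Finset.sum_congr rfl fun k _ => by ring
  rw [step, Finset.sum_sub_distrib, Finset.sum_add_distrib,
    ← Finset.mul_sum _ _ κ, ← Finset.mul_sum _ _ (2:ℝ), ← Finset.mul_sum _ _ (2:ℝ)]

lemma L2 {n : ℕ} (x : ℝ) (q a : Fin n → ℝ) (hx : ∀ k, x - q k ≠ 0)
    (hd : ∀ j k : Fin n, j ≠ k → q j - q k ≠ 0) :
    (∑ k, a k / (x - q k)) * (∑ k, (1:ℝ) / (x - q k) ^ 2)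
      = ∑ k, a k / (x - q k) ^ 3
        + ∑ k, (∑ j ∈ Finset.univ.erase k, (a k - a j) / (q k - q j) ^ 2) / (x - q k)
        + ∑ k, (∑ j ∈ Finset.univ.erase k, a j / (q k - q j)) / (x - q k) ^ 2 := by
  rw [Finset.sum_mul_sum]
  -- split diagonal
  have split : ∀ k : Fin n, ∑ j, (a k / (x - q k)) * ((1:ℝ) / (x - q j) ^ 2)
      = a k / (x - q k) ^ 3
        + ∑ j ∈ Finset.univ.erase k, (a k / (x - q k)) * ((1:ℝ) / (x - q j) ^ 2) := by
    intro k
    rw [← Finset.add_sum_erase _ _ (Finset.mem_univ k)]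
    congr 1
    field_simp
  rw [Finset.sum_congr rfl fun k _ => split k, Finset.sum_add_distrib, add_assoc]
  congr 1
  -- now the off-diagonal double sum
  have pairfrac : ∀ k : Fin n, ∀ j ∈ Finset.univ.erase k,
      (a k / (x - q k)) * ((1:ℝ) / (x - q j) ^ 2)
        = a k / ((q k - q j) ^ 2 * (x - q k))
          - a k / ((q k - q j) ^ 2 * (x - q j))
          - a k / ((q k - q j) * (x - q j) ^ 2) := by
    intro k j hj
    have hjk : j ≠ k := Finset.ne_of_mem_erase hj
    have h1 := hd k j hjk.symm
    have hxk := hx k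
    have hxj := hx j
    field_simp
    ring
  rw [Finset.sum_congr rfl fun k _ => Finset.sum_congr rfl (pairfrac k)]
  simp only [Finset.sum_sub_distrib]
  rw [sum_erase_swap (fun k j => a k / ((q k - q j) ^ 2 * (x - q j))),
    sum_erase_swap (fun k j => a k / ((q k - q j) * (x - q j) ^ 2))]
  -- RHS expansion
  have hS : ∑ k, (∑ j ∈ Finset.univ.erase k, (a k - a j) / (q k - q j) ^ 2) / (x - q k)
      = ∑ k, ∑ j ∈ Finset.univ.erase k,
          (a k / ((q k - q j) ^ 2 * (x - q k)) - a j / ((q j - q k) ^ 2 * (x - q k))) := by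
    refine Finset.sum_congr rfl fun k _ => ?_
    rw [Finset.sum_div]
    refine Finset.sum_congr rfl fun j hj => ?_
    have hjk : j ≠ k := Finset.ne_of_mem_erase hj
    have h1 := hd k j hjk.symm
    have h2 := hd j k hjk
    have hxk := hx k
    field_simp
    ring
  have hT : ∑ k, (∑ j ∈ Finset.univ.erase k, a j / (q k - q j)) / (x - q k) ^ 2
      = ∑ k, ∑ j ∈ Finset.univ.erase k, (- (a j / ((q j - q k) * (x - q k) ^ 2))) := by
    refine Finset.sum_congr rfl fun k _ => ?_
    rw [Finset.sum_div]
    refine Finset.sum_congr rfl fun j hj => ?_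
    have hjk : j ≠ k := Finset.ne_of_mem_erase hj
    have h1 := hd k j hjk.symm
    have h2 := hd j k hjk
    have hxk := hx k
    field_simp
    ring
  rw [hS, hT]
  simp only [Finset.sum_sub_distrib, Finset.sum_neg_distrib]
  ring



/-- Partial derivative in the first ("time") variable. -/
noncomputable def pT (F : ℝ → ℝ → ℝ) : ℝ → ℝ → ℝ := fun t x => deriv (fun s => F s x) t

/-- Partial derivative in the second ("space") variable. -/
noncomputable def pX (F : ℝ → ℝ → ℝ) : ℝ → ℝ → ℝ := fun t x => deriv (fun y => F t y) x

/-- for quantum Painlevé II with the pole ansatz (`N = κ` poles), the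
second governing equation (3.2) holds away from the poles if and only if the system
(3.22)–(3.24) of ODEs holds for every `t` and every `k`. -/
theorem qp2_second_governing_equation_iff_ode_system
    (κ : ℕ) (hκ : 1 ≤ κ)
    (Q : Fin κ → ℝ → ℝ)
    (hQ : ∀ k, ContDiff ℝ 2 (Q k))
    (hQd : ∀ t, ∀ j k : Fin κ, j ≠ k → Q j t ≠ Q k t)
    (J₀ : ℝ → ℝ) (hJ₀ : ContDiff ℝ 1 J₀)
    (v : ℝ → ℝ → ℝ) (hv : ∀ t x, v t x = t - x ^ 2)
    (R : Fin κ → ℝ → ℝ)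
    (hR : ∀ k t, R k t = ∑ j ∈ Finset.univ.erase k, 1 / (Q k t - Q j t))
    (A : Fin κ → ℝ → ℝ)
    (hA : ∀ k t, A k t = (κ : ℝ) * deriv (Q k) t + t - (Q k t) ^ 2 - 2 * R k t)
    (bp b₁ : ℝ → ℝ → ℝ)
    (hbp : ∀ t x, bp t x = -(1 / (κ : ℝ)) * ∑ k, 1 / (x - Q k t))
    (hb₁ : ∀ t x, 2 * b₁ t x = (1 / (κ : ℝ)) * ∑ k, A k t / (x - Q k t)
        - (2 / (κ : ℝ)) * ∑ k, Q k t - J₀ t) :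
    (∀ t x, (∀ k, x ≠ Q k t) →
        (κ : ℝ) * pT b₁ t x + pX (pX b₁) t x + v t x * pX b₁ t x
          = 2 * (κ : ℝ) * b₁ t x * pX bp t x)
    ↔
    (∀ t, ∀ k : Fin κ,
        (((κ : ℝ) * deriv (Q k) t - t + (Q k t) ^ 2) * A k t
          = 2 * ((∑ j ∈ Finset.univ.erase k, A j t / (Q k t - Q j t))
              - 2 * ∑ j, Q j t - (κ : ℝ) * J₀ t))
      ∧ ((κ : ℝ) * deriv (A k) t
          = -2 * Q k t * A k t
            + 2 * ∑ j ∈ Finset.univ.erase k,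
                (A k t - A j t) / (Q k t - Q j t) ^ 2)
      ∧ ((κ : ℝ) * deriv J₀ t + 2 * ∑ j, deriv (Q j) t
          = (1 / (κ : ℝ)) * ∑ j, A j t)) := by
  classical
  have hκ0 : (κ : ℝ) ≠ 0 := Nat.cast_ne_zero.2 (by omega)
  have hQdiff : ∀ k, Differentiable ℝ (Q k) := fun k => (hQ k).differentiable (by norm_num)
  have hQ'diff : ∀ k, Differentiable ℝ (deriv (Q k)) := by
    intro k
    have h2 : ContDiff ℝ ((1:ℕ∞) + 1) (Q k) := by norm_num; exact hQ k
    exact (contDiff_succ_iff_deriv.mp h2).2.2.differentiable (by norm_num)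
  have hJdiff : Differentiable ℝ J₀ := hJ₀.differentiable (by norm_num)
  have hsub : ∀ t, ∀ j k : Fin κ, j ≠ k → Q j t - Q k t ≠ 0 :=
    fun t j k h => sub_ne_zero.2 (hQd t j k h)
  have hRdiff : ∀ k, Differentiable ℝ (R k) := by
    intro k
    have hfn : R k = fun s => ∑ j ∈ Finset.univ.erase k, 1 / (Q k s - Q j s) :=
      funext fun s => hR k s
    rw [hfn]
    apply Differentiable.fun_sum
    intro j hj
    have hkj : k ≠ j := (Finset.ne_of_mem_erase hj).symm
    exact (differentiable_const 1).div ((hQdiff k).sub (hQdiff j)) (fun s => hsub s k j hkj)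
  have hAdiff : ∀ k, Differentiable ℝ (A k) := by
    intro k
    have hfn : A k = fun s => (κ : ℝ) * deriv (Q k) s + s - Q k s ^ 2 - 2 * R k s :=
      funext fun s => hA k s
    rw [hfn]
    exact ((((differentiable_const _).mul (hQ'diff k)).add differentiable_id).sub
      ((hQdiff k).pow 2)).sub ((differentiable_const 2).mul (hRdiff k))
  have hinj : ∀ t, Function.Injective (fun k => Q k t) := by
    intro t j k h
    by_contra hne
    exact hQd t j k hne h
  have hopen : ∀ t, IsOpen {y : ℝ | ∀ k, y ≠ Q k t} := by
    intro t
    have hs : {y : ℝ | ∀ k, y ≠ Q k t} = (Set.range fun k => Q k t)ᶜ := by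
      ext y
      simp only [Set.mem_setOf_eq, Set.mem_compl_iff, Set.mem_range, not_exists]
      exact ⟨fun h k hk => (h k) hk.symm, fun h k hk => (h k) hk.symm⟩
    rw [hs]
    exact (Set.finite_range _).isClosed.isOpen_compl
  have hb₁fun : ∀ t, (fun y => b₁ t y)
      = fun y => ((1 / (κ : ℝ)) * ∑ k, A k t / (y - Q k t)
          - (2 / (κ : ℝ)) * ∑ k, Q k t - J₀ t) / 2 := by
    intro t; funext y; have := hb₁ t y; linarith
  have hb₁tfun : ∀ x, (fun s => b₁ s x)
      = fun s => ((1 / (κ : ℝ)) * ∑ k, A k s / (x - Q k s)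
          - (2 / (κ : ℝ)) * ∑ k, Q k s - J₀ s) / 2 := by
    intro x; funext s; have := hb₁ s x; linarith
  -- space derivative of b₁
  have h_pXb₁ : ∀ t y, (∀ k, y ≠ Q k t) →
      pX b₁ t y = -(1 / (2 * (κ : ℝ))) * ∑ k, A k t / (y - Q k t) ^ 2 := by
    intro t y hy
    have hs : HasDerivAt (fun z => ∑ k, A k t / (z - Q k t))
        (∑ k, -(A k t / (y - Q k t) ^ 2)) y := by
      apply HasDerivAt.fun_sum
      intro k _
      have hne : y - Q k t ≠ 0 := sub_ne_zero.2 (hy k)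
      have h := (hasDerivAt_const y (A k t)).div ((hasDerivAt_id y).sub_const (Q k t)) hne
      convert h using 1
      · rfl
      · rfl
      simp only [id, Pi.pow_apply]
      field_simp
      ring
    have hder := (((hs.const_mul (1 / (κ : ℝ))).sub_const ((2 / (κ : ℝ)) * ∑ k, Q k t)).sub_const
      (J₀ t)).div_const 2
    have : pX b₁ t y = deriv (fun z => b₁ t z) y := rfl
    rw [this, hb₁fun t, hder.deriv, Finset.sum_neg_distrib]
    ring
  -- second space derivative of b₁
  have h_pXpXb₁ : ∀ t x, (∀ k, x ≠ Q k t) →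
      pX (pX b₁) t x = (1 / (κ : ℝ)) * ∑ k, A k t / (x - Q k t) ^ 3 := by
    intro t x hx
    have hev : (fun y => pX b₁ t y)
        =ᶠ[𝓝 x] fun y => -(1 / (2 * (κ : ℝ))) * ∑ k, A k t / (y - Q k t) ^ 2 := by
      filter_upwards [(hopen t).mem_nhds (show x ∈ {y : ℝ | ∀ k, y ≠ Q k t} from hx)] with y hy
      exact h_pXb₁ t y hy
    have h1 : pX (pX b₁) t x
        = deriv (fun y => -(1 / (2 * (κ : ℝ))) * ∑ k, A k t / (y - Q k t) ^ 2) x :=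
      hev.deriv_eq
    have hs : HasDerivAt (fun y => ∑ k, A k t / (y - Q k t) ^ 2)
        (∑ k, -(2 * (A k t / (x - Q k t) ^ 3))) x := by
      apply HasDerivAt.fun_sum
      intro k _
      have hne : x - Q k t ≠ 0 := sub_ne_zero.2 (hx k)
      have h := (hasDerivAt_const x (A k t)).div
        (((hasDerivAt_id x).sub_const (Q k t)).pow 2) (pow_ne_zero 2 hne)
      convert h using 1
      · rfl
      · rfl
      simp only [id, Pi.pow_apply]
      field_simp
      ring
    have hder := hs.const_mul (-(1 / (2 * (κ : ℝ))))
    rw [h1, hder.deriv, Finset.sum_neg_distrib, ← Finset.mul_sum _ _ (2:ℝ)]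
    field_simp
  -- time derivative of b₁
  have h_pTb₁ : ∀ t x, (∀ k, x ≠ Q k t) →
      pT b₁ t x = ((1 / (κ : ℝ)) * ∑ k, (deriv (A k) t * (x - Q k t)
            + A k t * deriv (Q k) t) / (x - Q k t) ^ 2
          - (2 / (κ : ℝ)) * ∑ k, deriv (Q k) t - deriv J₀ t) / 2 := by
    intro t x hx
    have hs : HasDerivAt (fun s => ∑ k, A k s / (x - Q k s))
        (∑ k, (deriv (A k) t * (x - Q k t) + A k t * deriv (Q k) t) / (x - Q k t) ^ 2) t := by
      apply HasDerivAt.fun_sum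
      intro k _
      have hA' : HasDerivAt (A k) (deriv (A k) t) t := (hAdiff k t).hasDerivAt
      have hQk : HasDerivAt (fun s => x - Q k s) (-(deriv (Q k) t)) t :=
        ((hQdiff k t).hasDerivAt).const_sub x
      have h := hA'.div hQk (sub_ne_zero.2 (hx k))
      convert h using 1
      · rfl
      · rfl
      ring
    have hq : HasDerivAt (fun s => ∑ k, Q k s) (∑ k, deriv (Q k) t) t :=
      HasDerivAt.fun_sum fun k _ => (hQdiff k t).hasDerivAt
    have hJ : HasDerivAt J₀ (deriv J₀ t) t := (hJdiff t).hasDerivAt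
    have hder := (((hs.const_mul (1 / (κ : ℝ))).sub (hq.const_mul (2 / (κ : ℝ)))).sub hJ).div_const 2
    have h0 : pT b₁ t x = deriv (fun s => b₁ s x) t := rfl
    rw [h0, hb₁tfun x]
    exact hder.deriv
  -- space derivative of bp
  have h_pXbp : ∀ t x, (∀ k, x ≠ Q k t) →
      pX bp t x = (1 / (κ : ℝ)) * ∑ k, 1 / (x - Q k t) ^ 2 := by
    intro t x hx
    have hs : HasDerivAt (fun y => ∑ k, 1 / (y - Q k t))
        (∑ k, -((1:ℝ) / (x - Q k t) ^ 2)) x := by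
      apply HasDerivAt.fun_sum
      intro k _
      have hne : x - Q k t ≠ 0 := sub_ne_zero.2 (hx k)
      have h := (hasDerivAt_const x (1:ℝ)).div ((hasDerivAt_id x).sub_const (Q k t)) hne
      convert h using 1
      · rfl
      · rfl
      simp only [id, Pi.pow_apply]
      field_simp
      ring
    have hder := hs.const_mul (-(1 / (κ : ℝ)))
    have h0 : pX bp t x = deriv (fun y => bp t y) x := rfl
    have hfn : (fun y => bp t y) = fun y => -(1 / (κ : ℝ)) * ∑ k, 1 / (y - Q k t) :=
      funext fun y => hbp t y
    rw [h0, hfn, hder.deriv, Finset.sum_neg_distrib]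
    ring
  -- the key algebraic identity
  have main : ∀ t x, (∀ k, x ≠ Q k t) →
      2 * (κ : ℝ) * ((κ : ℝ) * pT b₁ t x + pX (pX b₁) t x + v t x * pX b₁ t x
          - 2 * (κ : ℝ) * b₁ t x * pX bp t x)
      = (∑ k, (((κ : ℝ) * deriv (Q k) t - t + (Q k t) ^ 2) * A k t
            - 2 * ((∑ j ∈ Finset.univ.erase k, A j t / (Q k t - Q j t))
              - 2 * ∑ j, Q j t - (κ : ℝ) * J₀ t)) / (x - Q k t) ^ 2)
        + (∑ k, ((κ : ℝ) * deriv (A k) t + 2 * Q k t * A k t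
            - 2 * ∑ j ∈ Finset.univ.erase k, (A k t - A j t) / (Q k t - Q j t) ^ 2)
            / (x - Q k t))
        + ((∑ j, A j t) - 2 * (κ : ℝ) * (∑ j, deriv (Q j) t)
            - (κ : ℝ) ^ 2 * deriv J₀ t) := by
    intro t x hx
    have hxk : ∀ k, x - Q k t ≠ 0 := fun k => sub_ne_zero.2 (hx k)
    have hdk : ∀ j k : Fin κ, j ≠ k → Q j t - Q k t ≠ 0 := fun j k h => hsub t j k h
    have hb : b₁ t x = ((1 / (κ : ℝ)) * ∑ k, A k t / (x - Q k t)
        - (2 / (κ : ℝ)) * ∑ k, Q k t - J₀ t) / 2 := by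
      have := hb₁ t x; linarith
    have m1 : 2 * (κ : ℝ) * ((κ : ℝ) * pT b₁ t x)
        = (κ : ℝ) * (∑ k, (deriv (A k) t * (x - Q k t)
            + A k t * deriv (Q k) t) / (x - Q k t) ^ 2)
          - 2 * (κ : ℝ) * (∑ k, deriv (Q k) t) - (κ : ℝ) ^ 2 * deriv J₀ t := by
      rw [h_pTb₁ t x hx]; field_simp
    have m2 : 2 * (κ : ℝ) * pX (pX b₁) t x = 2 * ∑ k, A k t / (x - Q k t) ^ 3 := by
      rw [h_pXpXb₁ t x hx]; field_simp
    have m3 : 2 * (κ : ℝ) * (v t x * pX b₁ t x)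
        = -((t - x ^ 2) * ∑ k, A k t / (x - Q k t) ^ 2) := by
      rw [h_pXb₁ t x hx, hv t x]; field_simp
    have m4 : 2 * (κ : ℝ) * (2 * (κ : ℝ) * b₁ t x * pX bp t x)
        = 2 * ((∑ k, A k t / (x - Q k t)) * (∑ k, (1:ℝ) / (x - Q k t) ^ 2))
          - (4 * (∑ j, Q j t) + 2 * (κ : ℝ) * J₀ t) * (∑ k, (1:ℝ) / (x - Q k t) ^ 2) := by
      rw [h_pXbp t x hx, hb]; field_simp; ring
    have h1 : ∑ k, (deriv (A k) t * (x - Q k t) + A k t * deriv (Q k) t) / (x - Q k t) ^ 2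
        = ∑ k, deriv (A k) t / (x - Q k t) + ∑ k, A k t * deriv (Q k) t / (x - Q k t) ^ 2 :=
      L1 x (fun k => Q k t) (fun k => A k t) (fun k => deriv (A k) t)
        (fun k => deriv (Q k) t) hxk
    have h2 : (∑ k, A k t / (x - Q k t)) * (∑ k, (1:ℝ) / (x - Q k t) ^ 2)
        = ∑ k, A k t / (x - Q k t) ^ 3
          + ∑ k, (∑ j ∈ Finset.univ.erase k, (A k t - A j t) / (Q k t - Q j t) ^ 2)
              / (x - Q k t)
          + ∑ k, (∑ j ∈ Finset.univ.erase k, A j t / (Q k t - Q j t)) / (x - Q k t) ^ 2 :=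
      L2 x (fun k => Q k t) (fun k => A k t) hxk hdk
    have h3 : (t - x ^ 2) * ∑ k, A k t / (x - Q k t) ^ 2
        = ∑ k, (t - (Q k t) ^ 2) * A k t / (x - Q k t) ^ 2
          - 2 * ∑ k, Q k t * A k t / (x - Q k t) - ∑ k, A k t :=
      L3 x t (fun k => Q k t) (fun k => A k t) hxk
    have h4 : ∑ k, (((κ : ℝ) * deriv (Q k) t - t + (Q k t) ^ 2) * A k t
          - 2 * ((∑ j ∈ Finset.univ.erase k, A j t / (Q k t - Q j t))
            - 2 * ∑ j, Q j t - (κ : ℝ) * J₀ t)) / (x - Q k t) ^ 2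
        = (κ : ℝ) * ∑ k, A k t * deriv (Q k) t / (x - Q k t) ^ 2
          - ∑ k, (t - (Q k t) ^ 2) * A k t / (x - Q k t) ^ 2
          - 2 * ∑ k, (∑ j ∈ Finset.univ.erase k, A j t / (Q k t - Q j t)) / (x - Q k t) ^ 2
          + (4 * ∑ j, Q j t + 2 * (κ : ℝ) * J₀ t) * ∑ k, 1 / (x - Q k t) ^ 2 :=
      L4 x t (J₀ t) (κ : ℝ) (fun k => Q k t) (fun k => A k t) (fun k => deriv (Q k) t)
    have h5 : ∑ k, ((κ : ℝ) * deriv (A k) t + 2 * Q k t * A k t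
          - 2 * ∑ j ∈ Finset.univ.erase k, (A k t - A j t) / (Q k t - Q j t) ^ 2)
          / (x - Q k t)
        = (κ : ℝ) * ∑ k, deriv (A k) t / (x - Q k t)
          + 2 * ∑ k, Q k t * A k t / (x - Q k t)
          - 2 * ∑ k, (∑ j ∈ Finset.univ.erase k, (A k t - A j t) / (Q k t - Q j t) ^ 2)
              / (x - Q k t) :=
      L5 x (κ : ℝ) (fun k => Q k t) (fun k => A k t) (fun k => deriv (A k) t)
    linear_combination m1 + m2 + m3 - m4 + (κ : ℝ) * h1 - 2 * h2 - h3 - h4 - h5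
  have h2κ : (2 * (κ : ℝ)) ≠ 0 := mul_ne_zero two_ne_zero hκ0
  constructor
  · intro hpde t k
    have hext := extract_poles (fun j => Q j t)
        (fun j => ((κ : ℝ) * deriv (Q j) t - t + (Q j t) ^ 2) * A j t
          - 2 * ((∑ i ∈ Finset.univ.erase j, A i t / (Q j t - Q i t))
            - 2 * ∑ i, Q i t - (κ : ℝ) * J₀ t))
        (fun j => (κ : ℝ) * deriv (A j) t + 2 * Q j t * A j t
          - 2 * ∑ i ∈ Finset.univ.erase j, (A j t - A i t) / (Q j t - Q i t) ^ 2)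
        ((∑ j, A j t) - 2 * (κ : ℝ) * (∑ j, deriv (Q j) t) - (κ : ℝ) ^ 2 * deriv J₀ t)
        (hinj t)
        (by
          intro x hxq
          have hm := main t x hxq
          rw [show (κ : ℝ) * pT b₁ t x + pX (pX b₁) t x + v t x * pX b₁ t x
              - 2 * (κ : ℝ) * b₁ t x * pX bp t x = 0 from by rw [hpde t x hxq]; ring,
            mul_zero] at hm
          exact hm.symm)
    obtain ⟨hE2, hE1, hE0⟩ := hext
    refine ⟨by have := hE2 k; linarith,
      by have := hE1 k; linarith, ?_⟩
    have hSA : (∑ j, A j t) = 2 * (κ : ℝ) * (∑ j, deriv (Q j) t) + (κ : ℝ) ^ 2 * deriv J₀ t := by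
      linarith
    rw [hSA]
    field_simp
    ring
  · intro hsys t x hxq
    have hm := main t x hxq
    have hE2 : ∀ j : Fin κ, ((κ : ℝ) * deriv (Q j) t - t + (Q j t) ^ 2) * A j t
        - 2 * ((∑ i ∈ Finset.univ.erase j, A i t / (Q j t - Q i t))
          - 2 * ∑ i, Q i t - (κ : ℝ) * J₀ t) = 0 := by
      intro j
      have := (hsys t j).1
      linarith
    have hE1 : ∀ j : Fin κ, (κ : ℝ) * deriv (A j) t + 2 * Q j t * A j t
        - 2 * ∑ i ∈ Finset.univ.erase j, (A j t - A i t) / (Q j t - Q i t) ^ 2 = 0 := by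
      intro j
      have := (hsys t j).2.1
      linarith
    have hE0 : (∑ j, A j t) - 2 * (κ : ℝ) * (∑ j, deriv (Q j) t)
        - (κ : ℝ) ^ 2 * deriv J₀ t = 0 := by
      have h := (hsys t ⟨0, hκ⟩).2.2
      have h' : (κ : ℝ) * ((κ : ℝ) * deriv J₀ t + 2 * ∑ j, deriv (Q j) t)
          = (κ : ℝ) * ((1 / (κ : ℝ)) * ∑ j, A j t) := by rw [h]
      have h'' : (κ : ℝ) * ((1 / (κ : ℝ)) * ∑ j, A j t) = ∑ j, A j t := by
        field_simp
      rw [h''] at h'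
      linear_combination - h'
    rw [Finset.sum_eq_zero (fun j _ => by rw [hE2 j, zero_div]),
      Finset.sum_eq_zero (fun j _ => by rw [hE1 j, zero_div]), hE0] at hm
    have hinner : (κ : ℝ) * pT b₁ t x + pX (pX b₁) t x + v t x * pX b₁ t x
        - 2 * (κ : ℝ) * b₁ t x * pX bp t x = 0 := by
      apply mul_left_cancel₀ h2κ
      rw [mul_zero]
      linarith
    linarith
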